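/- Let M be a square matrix over a field indexed by a finite set V, and let Y ⊆ V be such that the principal submatrix M[Y] is nonsingular. Then for every subset X ⊆ V, det((M*Y)[X]) = det(M[Y Δ X]) / det(M[Y]), where M*Y denotes the principal pivot transform of M on Y and Δ denotes symmetric difference. -/

import Mathlib

open Matrix

variable {V : Type*} [Fintype V] [DecidableEq V] {F : Type*} [Field F]

/-- The submatrix of `M` with rows indexed by `X` and columns indexed by `Y`. -/
def psub (M : Matrix V V F) (X Y : Finset V) : Matrix {a // a ∈ X} {a // a ∈ Y} F :=
  fun i j => M i j

/-- The principal pivot transform `M*Y` of `M` on `Y`. -/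
noncomputable def ppt (M : Matrix V V F) (Y : Finset V) : Matrix V V F :=
  fun i j =>
    if hi : i ∈ Y then
      if hj : j ∈ Y then (psub M Y Y)⁻¹ ⟨i, hi⟩ ⟨j, hj⟩
      else ((psub M Y Y)⁻¹ * psub M Y Yᶜ) ⟨i, hi⟩ ⟨j, Finset.mem_compl.mpr hj⟩
    else
      if hj : j ∈ Y then
        (-(psub M Yᶜ Y * (psub M Y Y)⁻¹)) ⟨i, Finset.mem_compl.mpr hi⟩ ⟨j, hj⟩
      else
        (psub M Yᶜ Yᶜ - psub M Yᶜ Y * (psub M Y Y)⁻¹ * psub M Y Yᶜ)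
          ⟨i, Finset.mem_compl.mpr hi⟩ ⟨j, Finset.mem_compl.mpr hj⟩

/-- Rows of `A` on `S`, identity rows elsewhere. -/
def mixr (S : Finset V) (A : Matrix V V F) : Matrix V V F :=
  fun i j => if i ∈ S then A i j else (1 : Matrix V V F) i j

/-- Diagonal sign matrix: `+1` on `Y`, `-1` off `Y`. -/
def Dmix (Y : Finset V) : Matrix V V F :=
  Matrix.diagonal (fun i => if i ∈ Y then 1 else -1)

/-- The equivalence `S ⊕ Sᶜ ≃ V`. -/
def eqv (S : Finset V) : ({a // a ∈ S} ⊕ {a // a ∈ Sᶜ}) ≃ V where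
  toFun := Sum.elim Subtype.val Subtype.val
  invFun v := if h : v ∈ S then Sum.inl ⟨v, h⟩ else Sum.inr ⟨v, Finset.mem_compl.mpr h⟩
  left_inv x := by
    rcases x with x | x
    · simp [x.2]
    · have hx := Finset.mem_compl.mp x.2
      simp [hx]
  right_inv v := by by_cases h : v ∈ S <;> simp [h]

lemma submatrix_eqv_mixr (S : Finset V) (A : Matrix V V F) :
    (mixr S A).submatrix (eqv S) (eqv S) =
      fromBlocks (psub A S S) (psub A S Sᶜ) 0 1 := by
  ext (i | i) (j | j)
  · simp [mixr, eqv, psub, fromBlocks, i.2]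
  · simp [mixr, eqv, psub, fromBlocks, i.2]
  · have hi := Finset.mem_compl.mp i.2
    have hne : (i : V) ≠ (j : V) := fun h => hi (h ▸ j.2)
    simp [mixr, eqv, psub, fromBlocks, hi, one_apply, hne]
  · have hi := Finset.mem_compl.mp i.2
    simp [mixr, eqv, fromBlocks, hi, one_apply]

lemma det_mixr (S : Finset V) (A : Matrix V V F) :
    (mixr S A).det = (psub A S S).det := by
  rw [← Matrix.det_submatrix_equiv_self (eqv S), submatrix_eqv_mixr,
    Matrix.det_fromBlocks_zero₂₁]
  simp

lemma submatrix_eqv_ppt (M : Matrix V V F) (Y : Finset V) :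
    (ppt M Y).submatrix (eqv Y) (eqv Y) =
      fromBlocks (psub M Y Y)⁻¹ ((psub M Y Y)⁻¹ * psub M Y Yᶜ)
        (-(psub M Yᶜ Y * (psub M Y Y)⁻¹))
        (psub M Yᶜ Yᶜ - psub M Yᶜ Y * (psub M Y Y)⁻¹ * psub M Y Yᶜ) := by
  ext (i | i) (j | j)
  · simp [ppt, eqv, fromBlocks, i.2, j.2]
  · simp [ppt, eqv, fromBlocks, i.2, Finset.mem_compl.mp j.2]
  · simp [ppt, eqv, fromBlocks, Finset.mem_compl.mp i.2, j.2]
  · simp [ppt, eqv, fromBlocks, Finset.mem_compl.mp i.2, Finset.mem_compl.mp j.2]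

lemma submatrix_eqv_DS (M : Matrix V V F) (Y : Finset V) :
    (Dmix Y * mixr Y M).submatrix (eqv Y) (eqv Y) =
      fromBlocks (psub M Y Y) (psub M Y Yᶜ) 0 (-1) := by
  ext (i | i) (j | j)
  · simp [Dmix, mixr, eqv, psub, fromBlocks, Matrix.diagonal_mul, i.2]
  · simp [Dmix, mixr, eqv, psub, fromBlocks, Matrix.diagonal_mul, i.2]
  · have hi := Finset.mem_compl.mp i.2
    have hne : (i : V) ≠ (j : V) := fun h => hi (h ▸ j.2)
    simp [Dmix, mixr, eqv, fromBlocks, Matrix.diagonal_mul, hi, one_apply, hne]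
  · have hi := Finset.mem_compl.mp i.2
    simp [Dmix, mixr, eqv, fromBlocks, Matrix.diagonal_mul, hi, one_apply]
    split_ifs <;> simp

lemma submatrix_eqv_DR (M : Matrix V V F) (Y : Finset V) :
    (Dmix Y * mixr Yᶜ M).submatrix (eqv Y) (eqv Y) =
      fromBlocks 1 0 (-(psub M Yᶜ Y)) (-(psub M Yᶜ Yᶜ)) := by
  ext (i | i) (j | j)
  · have hj : (j : V) ∈ Y := j.2
    have hi : ¬ (i : V) ∈ Yᶜ := fun h => Finset.mem_compl.mp h i.2
    simp [Dmix, mixr, eqv, fromBlocks, Matrix.diagonal_mul, i.2, hi, one_apply]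
  · have hj := Finset.mem_compl.mp j.2
    have hi : ¬ (i : V) ∈ Yᶜ := fun h => Finset.mem_compl.mp h i.2
    have hne : (i : V) ≠ (j : V) := fun h => hj (h ▸ i.2)
    simp [Dmix, mixr, eqv, fromBlocks, Matrix.diagonal_mul, i.2, hi, one_apply, hne]
  · have hi := Finset.mem_compl.mp i.2
    simp [Dmix, mixr, eqv, psub, fromBlocks, Matrix.diagonal_mul, hi, i.2]
  · have hi := Finset.mem_compl.mp i.2
    simp [Dmix, mixr, eqv, psub, fromBlocks, Matrix.diagonal_mul, hi, i.2]

lemma submatrix_eqv_inj {P Q : Matrix V V F} (S : Finset V)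
    (h : P.submatrix (eqv S) (eqv S) = Q.submatrix (eqv S) (eqv S)) : P = Q := by
  ext i k
  have := congrFun (congrFun h ((eqv S).symm i)) ((eqv S).symm k)
  simpa using this

lemma ppt_mul (M : Matrix V V F) (Y : Finset V) (hY : IsUnit (psub M Y Y).det) :
    ppt M Y * (Dmix Y * mixr Y M) = Dmix Y * mixr Yᶜ M := by
  apply submatrix_eqv_inj Y
  rw [← Matrix.submatrix_mul_equiv (ppt M Y) (Dmix Y * mixr Y M) _ (eqv Y) _,
    submatrix_eqv_ppt, submatrix_eqv_DS, submatrix_eqv_DR, fromBlocks_multiply]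
  have h1 : (psub M Y Y)⁻¹ * psub M Y Y = 1 := Matrix.nonsing_inv_mul _ hY
  rw [Matrix.fromBlocks_inj]
  refine ⟨?_, ?_, ?_, ?_⟩
  · rw [h1]; simp
  · simp
  · rw [Matrix.neg_mul, Matrix.mul_assoc, h1]; simp
  · rw [mul_neg_one, Matrix.neg_mul, Matrix.mul_assoc]; abel

lemma ppt_mix_mul (M : Matrix V V F) (Y X : Finset V) (hY : IsUnit (psub M Y Y).det) :
    mixr X (ppt M Y) * (Dmix Y * mixr Y M) = Dmix Y * mixr (symmDiff Y X) M := by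
  ext i k
  by_cases hiX : i ∈ X
  · have h1 : ((mixr X (ppt M Y) * (Dmix Y * mixr Y M)) : Matrix V V F) i k
        = ((ppt M Y * (Dmix Y * mixr Y M)) : Matrix V V F) i k := by
      simp [Matrix.mul_apply, mixr, hiX]
    rw [h1, ppt_mul M Y hY]
    by_cases hiY : i ∈ Y <;>
      simp [Dmix, mixr, Matrix.diagonal_mul, hiY, hiX, Finset.mem_symmDiff]
  · have h1 : ((mixr X (ppt M Y) * (Dmix Y * mixr Y M)) : Matrix V V F) i k
        = ((Dmix Y * mixr Y M) : Matrix V V F) i k := by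
      simp [Matrix.mul_apply, mixr, hiX, one_apply, ite_mul]
    rw [h1]
    by_cases hiY : i ∈ Y <;>
      simp [Dmix, mixr, Matrix.diagonal_mul, hiY, hiX, Finset.mem_symmDiff]

/-- **Tucker's theorem.**  If `M[Y]` is nonsingular then for every `X ⊆ V`,
`det((M*Y)[X]) = det(M[Y Δ X]) / det(M[Y])`. -/
theorem tucker_det_ppt (M : Matrix V V F) (Y : Finset V)
    (hY : IsUnit (psub M Y Y).det) (X : Finset V) :
    (psub (ppt M Y) X X).det
      = (psub M (symmDiff Y X) (symmDiff Y X)).det / (psub M Y Y).det := by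
  have hD : (Dmix Y : Matrix V V F).det ≠ 0 := by
    rw [Dmix, Matrix.det_diagonal]
    exact Finset.prod_ne_zero_iff.mpr fun i _ => by
      by_cases h : i ∈ Y <;> simp [h]
  have hEq := congrArg Matrix.det (ppt_mix_mul M Y X hY)
  rw [Matrix.det_mul, Matrix.det_mul, Matrix.det_mul, det_mixr, det_mixr, det_mixr] at hEq
  have hA : (psub M Y Y).det ≠ 0 := hY.ne_zero
  rw [eq_div_iff hA]
  exact mul_left_cancel₀ hD (by rw [← hEq]; ring)
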